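/- Let J₁ satisfy (J) and let p : (-∞, 0] → [0,∞) be continuous, nonincreasing, and strictly positive on (-∞, 0) with p(-l₀) > 0 for some l₀ > 0. If ∫_0^∞ x J₁(x) dx = ∞, then ∫_{-∞}^0 ∫_0^∞ J₁(x - y) p(x) dy dx = ∞. Concretely: for any l > l₀, ∫_{-l}^{-l₀} ∫_0^l J₁(x-y) dy dx ≥ ∫_{l₀}^l J₁(y)(y - l₀) dy, which diverges as l → ∞. -/

import Mathlib

open MeasureTheory Set ENNReal NNReal

-- Tonelli-type swap: ∫_{x < -l₀} ∫_{u > -x} f(u) du dx = ∫ f(u) (u - l₀)₊ du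
lemma aux_swap13 (f : ℝ → ℝ≥0∞) (hf : Measurable f) (l₀ : ℝ) :
    ∫⁻ x in Iio (-l₀), ∫⁻ u in Ioi (-x), f u = ∫⁻ u, f u * ENNReal.ofReal (u - l₀) := by
  have h1 : ∀ x : ℝ, (∫⁻ u in Ioi (-x), f u) = ∫⁻ u, if -x < u then f u else 0 := by
    intro x
    rw [← lintegral_indicator measurableSet_Ioi]
    exact lintegral_congr fun u => by simp [indicator, mem_Ioi]
  simp_rw [h1]
  rw [lintegral_lintegral_swap]
  · refine lintegral_congr fun u => ?_
    have h2 : ∀ x : ℝ, (if -x < u then f u else 0) = (Ioi (-u)).indicator (fun _ => f u) x := by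
      intro x
      have : -x < u ↔ -u < x := ⟨fun h => by linarith, fun h => by linarith⟩
      by_cases h : -x < u
      · simp [indicator, mem_Ioi, h, this.mp h]
      · simp [indicator, mem_Ioi, h, mt this.mpr h]
    simp_rw [h2]
    rw [lintegral_indicator measurableSet_Ioi, Measure.restrict_restrict measurableSet_Ioi,
      lintegral_const, Measure.restrict_apply MeasurableSet.univ, univ_inter, Ioi_inter_Iio,
      Real.volume_Ioo]
    congr 1; ring_nf
  · exact (Measurable.ite (measurableSet_lt measurable_fst.neg measurable_snd)
      (hf.comp measurable_snd) measurable_const).aemeasurable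


lemma aux_momdiv13 (J1 : ℝ → ℝ) (hJc : Continuous J1) (hJb : ∃ C, ∀ x, J1 x ≤ C)
    (hJnn : ∀ x, 0 ≤ J1 x) (hJint : ∫ x, J1 x = 1) (l₀ : ℝ) (hl₀ : 0 < l₀)
    (hmom : ∫⁻ x in Ioi (0:ℝ), ENNReal.ofReal (x * J1 x) = ⊤) :
    ∫⁻ u, ENNReal.ofReal (J1 u) * ENNReal.ofReal (u - l₀) = ⊤ := by
  obtain ⟨C, hC⟩ := hJb
  have hJm : Measurable J1 := hJc.measurable
  have hJi : Integrable J1 := by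
    by_contra h; rw [integral_undef h] at hJint; norm_num at hJint
  have hfin : ∫⁻ x, ENNReal.ofReal (J1 x) ≠ ⊤ := hJi.lintegral_lt_top.ne
  have hsplit : (∫⁻ x in Ioc (0:ℝ) l₀, ENNReal.ofReal (x * J1 x)) +
      ∫⁻ x in Ioi l₀, ENNReal.ofReal (x * J1 x) = ⊤ := by
    rw [← lintegral_union measurableSet_Ioi (Ioc_disjoint_Ioi le_rfl),
      Ioc_union_Ioi_eq_Ioi hl₀.le]
    exact hmom
  have h1 : (∫⁻ x in Ioc (0:ℝ) l₀, ENNReal.ofReal (x * J1 x)) ≠ ⊤ := by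
    have hb : ∀ x ∈ Ioc (0:ℝ) l₀, ENNReal.ofReal (x * J1 x) ≤ ENNReal.ofReal (l₀ * C) := by
      intro x hx
      apply ENNReal.ofReal_le_ofReal
      have h1 := hJnn x; have h2 := hC x
      nlinarith [hx.1.le, hx.2]
    have hle1 : (∫⁻ x in Ioc (0:ℝ) l₀, ENNReal.ofReal (x * J1 x)) ≤
        ENNReal.ofReal (l₀ * C) * volume (Ioc (0:ℝ) l₀) := by
      rw [← setLIntegral_const (Ioc (0:ℝ) l₀) (ENNReal.ofReal (l₀ * C))]
      exact setLIntegral_mono' measurableSet_Ioc hb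
    refine ne_top_of_le_ne_top ?_ hle1
    rw [Real.volume_Ioc]
    exact (ENNReal.mul_lt_top ENNReal.ofReal_lt_top ENNReal.ofReal_lt_top).ne
  have h2 : ∫⁻ x in Ioi l₀, ENNReal.ofReal (x * J1 x) = ⊤ := by
    by_contra h
    exact absurd hsplit (ENNReal.add_ne_top.mpr ⟨h1, h⟩)
  have h3 : (∫⁻ x in Ioi l₀, ENNReal.ofReal (l₀ * J1 x)) ≠ ⊤ := by
    refine ne_top_of_le_ne_top ?_ (setLIntegral_le_lintegral _ _)
    have : ∀ x : ℝ, ENNReal.ofReal (l₀ * J1 x)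
        = ENNReal.ofReal l₀ * ENNReal.ofReal (J1 x) := fun x => ENNReal.ofReal_mul hl₀.le
    simp_rw [this]
    rw [lintegral_const_mul _ (hJm.ennreal_ofReal)]
    exact (ENNReal.mul_lt_top ENNReal.ofReal_lt_top hfin.lt_top).ne
  have h4 : ∫⁻ x in Ioi l₀, ENNReal.ofReal ((x - l₀) * J1 x) = ⊤ := by
    by_contra h
    have hle : (∫⁻ x in Ioi l₀, ENNReal.ofReal (x * J1 x)) ≤
        (∫⁻ x in Ioi l₀, ENNReal.ofReal ((x - l₀) * J1 x)) +
          ∫⁻ x in Ioi l₀, ENNReal.ofReal (l₀ * J1 x) := by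
      have hm : Measurable fun x : ℝ => ENNReal.ofReal ((x - l₀) * J1 x) :=
        ((measurable_id.sub_const l₀).mul hJm).ennreal_ofReal
      rw [← lintegral_add_left hm]
      apply lintegral_mono
      intro x
      simp only []
      have hx : x * J1 x = (x - l₀) * J1 x + l₀ * J1 x := by ring
      rw [hx]
      exact ENNReal.ofReal_add_le
    rw [h2] at hle
    exact absurd (top_le_iff.mp hle) (ENNReal.add_ne_top.mpr ⟨h, h3⟩)
  refine top_le_iff.mp ?_
  calc (⊤ : ℝ≥0∞) = ∫⁻ x in Ioi l₀, ENNReal.ofReal ((x - l₀) * J1 x) := h4.symm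
    _ ≤ ∫⁻ x in Ioi l₀, ENNReal.ofReal (J1 x) * ENNReal.ofReal (x - l₀) := by
        refine setLIntegral_mono' measurableSet_Ioi fun x _ => ?_
        rw [mul_comm (x - l₀), ENNReal.ofReal_mul (hJnn x)]
    _ ≤ ∫⁻ x, ENNReal.ofReal (J1 x) * ENNReal.ofReal (x - l₀) :=
        setLIntegral_le_lintegral _ _

lemma aux_partB13 (J1 : ℝ → ℝ) (hJc : Continuous J1) (hJb : ∃ C, ∀ x, J1 x ≤ C)
    (hJnn : ∀ x, 0 ≤ J1 x) (hJeven : ∀ x, J1 (-x) = J1 x) (hJint : ∫ x, J1 x = 1)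
    (p : ℝ → ℝ) (hpanti : AntitoneOn p (Iic 0))
    (l₀ : ℝ) (hl₀ : 0 < l₀) (hpl₀ : 0 < p (-l₀))
    (hmom : ∫⁻ x in Ioi (0:ℝ), ENNReal.ofReal (x * J1 x) = ⊤) :
    ∫⁻ x in Iio (0:ℝ), ∫⁻ y in Ioi (0:ℝ), ENNReal.ofReal (J1 (x - y) * p x) = ⊤ := by
  have hJm : Measurable J1 := hJc.measurable
  have htrans : ∀ x : ℝ, (∫⁻ y in Ioi (0:ℝ), ENNReal.ofReal (J1 (x - y)))
      = ∫⁻ u in Ioi (-x), ENNReal.ofReal (J1 u) := by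
    intro x
    have h1 : (∫⁻ y in Ioi (0:ℝ), ENNReal.ofReal (J1 (x - y)))
        = ∫⁻ u in Iio x, ENNReal.ofReal (J1 u) := by
      have hpre : (fun u : ℝ => x - u) ⁻¹' (Ioi 0) = Iio x := by
        ext u; simp [mem_Ioi, mem_Iio, sub_pos]
      have := (Measure.measurePreserving_sub_left volume x).setLIntegral_comp_preimage_emb
        (MeasurableEquiv.subLeft x).measurableEmbedding
        (fun y => ENNReal.ofReal (J1 (x - y))) (Ioi 0)
      rw [hpre] at this
      rw [← this]
      refine setLIntegral_congr_fun measurableSet_Iio (fun u _ => ?_)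
      rw [show x - (x - u) = u by ring]
    have h2 : (∫⁻ u in Iio x, ENNReal.ofReal (J1 u))
        = ∫⁻ u in Ioi (-x), ENNReal.ofReal (J1 u) := by
      have hpre : (fun u : ℝ => -u) ⁻¹' (Iio x) = Ioi (-x) := by
        ext u; simp [mem_Ioi, mem_Iio, neg_lt]
      have := (Measure.measurePreserving_neg (volume : Measure ℝ)).setLIntegral_comp_preimage_emb
        (MeasurableEquiv.neg ℝ).measurableEmbedding
        (fun u => ENNReal.ofReal (J1 u)) (Iio x)
      rw [hpre] at this
      rw [← this]
      refine (setLIntegral_congr_fun measurableSet_Ioi (fun u _ => ?_)).symm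
      rw [hJeven]
    rw [h1, h2]
  have key : ∫⁻ x in Iio (-l₀), ∫⁻ u in Ioi (-x), ENNReal.ofReal (J1 u) = ⊤ := by
    rw [aux_swap13 _ hJm.ennreal_ofReal l₀]
    exact aux_momdiv13 J1 hJc hJb hJnn hJint l₀ hl₀ hmom
  have hp0 : ENNReal.ofReal (p (-l₀)) ≠ 0 := by
    simp [ENNReal.ofReal_eq_zero, not_le, hpl₀]
  refine top_le_iff.mp ?_
  calc (⊤ : ℝ≥0∞)
      = ENNReal.ofReal (p (-l₀)) * ∫⁻ x in Iio (-l₀), ∫⁻ u in Ioi (-x),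
          ENNReal.ofReal (J1 u) := by rw [key, ENNReal.mul_top hp0]
    _ = ∫⁻ x in Iio (-l₀), ENNReal.ofReal (p (-l₀)) * ∫⁻ u in Ioi (-x),
          ENNReal.ofReal (J1 u) :=
        (lintegral_const_mul' _ _ ENNReal.ofReal_ne_top).symm
    _ ≤ ∫⁻ x in Iio (-l₀), ∫⁻ y in Ioi (0:ℝ), ENNReal.ofReal (J1 (x - y) * p x) := by
        refine setLIntegral_mono' measurableSet_Iio fun x hx => ?_
        rw [← htrans x, ← lintegral_const_mul' _ _ ENNReal.ofReal_ne_top]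
        refine lintegral_mono fun y => ?_
        rw [ENNReal.ofReal_mul (hJnn _), mul_comm (ENNReal.ofReal (p (-l₀)))]
        refine mul_le_mul_right (ENNReal.ofReal_le_ofReal ?_) _
        have hx' : x ≤ -l₀ := le_of_lt hx
        exact hpanti (by simp only [mem_Iic]; linarith) (by simp only [mem_Iic]; linarith) hx'
    _ ≤ ∫⁻ x in Iio (0:ℝ), ∫⁻ y in Ioi (0:ℝ), ENNReal.ofReal (J1 (x - y) * p x) :=
        lintegral_mono_set (Iio_subset_Iio (by linarith))

theorem stmt_13 (J1 : ℝ → ℝ) (hJc : Continuous J1) (hJb : ∃ C, ∀ x, J1 x ≤ C)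
    (hJnn : ∀ x, 0 ≤ J1 x) (hJeven : ∀ x, J1 (-x) = J1 x) (hJint : ∫ x, J1 x = 1)
    (p : ℝ → ℝ) (hpc : ContinuousOn p (Iic 0)) (hpnn : ∀ x ≤ (0:ℝ), 0 ≤ p x)
    (hpanti : AntitoneOn p (Iic 0)) (hppos : ∀ x < (0:ℝ), 0 < p x)
    (l₀ : ℝ) (hl₀ : 0 < l₀) (hpl₀ : 0 < p (-l₀))
    (hmom : ∫⁻ x in Ioi (0:ℝ), ENNReal.ofReal (x * J1 x) = ⊤) :
    (∀ l > l₀, (∫ x in Icc (-l) (-l₀), ∫ y in Ioc (0:ℝ) l, J1 (x - y)) ≥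
        ∫ y in Icc l₀ l, J1 y * (y - l₀)) ∧
      ∫⁻ x in Iio (0:ℝ), ∫⁻ y in Ioi (0:ℝ), ENNReal.ofReal (J1 (x - y) * p x) = ⊤ := by
  have hJm : Measurable J1 := hJc.measurable
  set Φ : ℝ → ℝ := fun s => ∫ u in l₀..s, J1 u with hΦ
  have hΦd : ∀ t : ℝ, HasDerivAt Φ (J1 t) t :=
    fun t => (hJc.integral_hasStrictDerivAt l₀ t).hasDerivAt
  have hΦc : Continuous Φ := by
    rw [continuous_iff_continuousAt]; exact fun t => (hΦd t).continuousAt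
  have hsub : ∀ a b : ℝ, (∫ u in a..b, J1 u) = Φ b - Φ a := fun a b =>
    (intervalIntegral.integral_interval_sub_left (hJc.intervalIntegrable l₀ b)
      (hJc.intervalIntegrable l₀ a)).symm
  constructor
  · intro l hl
    have h0l : (0:ℝ) ≤ l := by linarith
    have heven : ∀ a b : ℝ, (∫ u in a..b, J1 u) = ∫ u in (-b)..(-a), J1 u := by
      intro a b
      have := intervalIntegral.integral_comp_neg (a := a) (b := b) (f := J1)
      simpa only [hJeven] using this
    have hinner : ∀ x : ℝ, (∫ y in Ioc (0:ℝ) l, J1 (x - y)) = Φ (l - x) - Φ (-x) := by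
      intro x
      rw [← intervalIntegral.integral_of_le h0l,
        intervalIntegral.integral_comp_sub_left J1 x, sub_zero, heven (x - l) x, neg_sub,
        hsub]
    have houter : (∫ x in Icc (-l) (-l₀), (Φ l - Φ (-x))) = ∫ y in l₀..l, (Φ l - Φ y) := by
      rw [integral_Icc_eq_integral_Ioc,
        ← intervalIntegral.integral_of_le (by linarith : -l ≤ -l₀)]
      have := intervalIntegral.integral_comp_neg (a := -l) (b := -l₀)
        (f := fun t => Φ l - Φ t)
      simpa only [neg_neg] using this
    have hmid : (∫ y in l₀..l, (Φ l - Φ y)) = (l - l₀) * Φ l - ∫ t in l₀..l, Φ t := by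
      rw [intervalIntegral.integral_sub intervalIntegrable_const
        (hΦc.intervalIntegrable _ _), intervalIntegral.integral_const, smul_eq_mul]
    have hparts : (∫ y in l₀..l, J1 y * (y - l₀))
        = (l - l₀) * Φ l - ∫ t in l₀..l, Φ t := by
      have h := intervalIntegral.integral_mul_deriv_eq_deriv_mul (a := l₀) (b := l)
        (u := fun s => s - l₀) (v := Φ) (u' := fun _ => (1:ℝ)) (v' := J1)
        (fun t _ => (hasDerivAt_id t).sub_const l₀) (fun t _ => hΦd t)
        intervalIntegrable_const (hJc.intervalIntegrable _ _)
      simp only [sub_self, zero_mul, one_mul, sub_zero] at h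
      calc (∫ y in l₀..l, J1 y * (y - l₀)) = ∫ y in l₀..l, (y - l₀) * J1 y := by
            simp_rw [mul_comm]
        _ = (l - l₀) * Φ l - ∫ t in l₀..l, Φ t := h
    rw [ge_iff_le]
    calc (∫ y in Icc l₀ l, J1 y * (y - l₀)) = ∫ y in l₀..l, J1 y * (y - l₀) := by
          rw [integral_Icc_eq_integral_Ioc, intervalIntegral.integral_of_le (by linarith)]
      _ = ∫ x in Icc (-l) (-l₀), (Φ l - Φ (-x)) := by rw [houter, hmid, hparts]
      _ ≤ ∫ x in Icc (-l) (-l₀), (Φ (l - x) - Φ (-x)) := by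
          refine setIntegral_mono_on ?_ ?_ measurableSet_Icc ?_
          · exact ((continuous_const.sub (hΦc.comp continuous_neg))).integrableOn_Icc
          · exact ((hΦc.comp (continuous_const.sub continuous_id)).sub
              (hΦc.comp continuous_neg)).integrableOn_Icc
          · intro x hx
            have hle : l ≤ l - x := by
              have := hx.2; have := hl₀; linarith
            have h0 : 0 ≤ ∫ u in l..(l - x), J1 u :=
              intervalIntegral.integral_nonneg hle (fun u _ => hJnn u)
            rw [hsub] at h0
            linarith
      _ = ∫ x in Icc (-l) (-l₀), ∫ y in Ioc (0:ℝ) l, J1 (x - y) := by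
          refine (setIntegral_congr_fun measurableSet_Icc fun x _ => ?_).symm
          exact hinner x
  · exact aux_partB13 J1 hJc hJb hJnn hJeven hJint p hpanti l₀ hl₀ hpl₀ hmom
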